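/- Let X be an almost surely bounded random vector in ℝ^p, ε a real random variable independent of X with E[ε²] < ∞ and E[g_τ(ε)] = 0, and C a random variable independent of the pair (ε, X). Set T = exp(X^⊤β⁰ + ε) for some β⁰ ∈ ℝ^p, δ = 1_{T ≤ C}, Y = min(T, C), and G_0(t) = P(C > t). Assume G_0 is continuous and G_0(T) ≥ ζ_0 > 0 almost surely. Then the weighted expectile score has mean zero: E[ (δ / G_0(Y)) · g_τ(ε) · X ] = 0 (componentwise), where on the event {δ = 1} one has Y = T. -/

import Mathlib

open MeasureTheory ProbabilityTheory Filter Topology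

noncomputable section

/-- `g_τ(x) = -2τx 1_{x≥0} - 2(1-τ)x 1_{x<0}`. -/
def gExp (τ x : ℝ) : ℝ := if 0 ≤ x then -2 * τ * x else -2 * (1 - τ) * x

lemma measurable_gExp (τ : ℝ) : Measurable (gExp τ) := by
  unfold gExp
  exact Measurable.ite (measurableSet_le measurable_const measurable_id)
    (by fun_prop) (by fun_prop)

lemma abs_gExp_le {τ : ℝ} (hτ : τ ∈ Set.Ioo (0:ℝ) 1) (x : ℝ) : |gExp τ x| ≤ 2 * |x| := by
  obtain ⟨h0, h1⟩ := hτ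
  unfold gExp
  by_cases h : 0 ≤ x
  · rw [if_pos h, abs_mul, abs_of_nonneg h]
    have : |(-2) * τ| = 2 * τ := by rw [abs_of_nonpos (by nlinarith)]; ring
    nlinarith [abs_nonneg x, le_abs_self x]
  · rw [if_neg h, abs_mul]
    push_neg at h
    rw [abs_of_neg h] at *
    have : |(-2) * (1 - τ)| = 2 * (1 - τ) := by rw [abs_of_nonpos (by nlinarith)]; ring
    nlinarith

lemma toReal_measure_ge {Ω : Type*} [MeasurableSpace Ω] (μ : Measure Ω) [IsProbabilityMeasure μ]
    {C : Ω → ℝ} (hCm : Measurable C) {G0 : ℝ → ℝ}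
    (hG0 : ∀ t, G0 t = (μ {ω | t < C ω}).toReal) (hG0cont : Continuous G0) (s : ℝ) :
    (μ {ω | s ≤ C ω}).toReal = G0 s := by
  have hanti : Antitone (fun n : ℕ => {ω | s - 1/(n+1:ℝ) < C ω}) := by
    intro n m hnm ω hω
    simp only [Set.mem_setOf_eq] at *
    have h1 : (1:ℝ)/(m+1) ≤ 1/(n+1) := by
      apply one_div_le_one_div_of_le (by positivity)
      have : (n:ℝ) ≤ m := by exact_mod_cast hnm
      linarith
    linarith
  have hInter : (⋂ n : ℕ, {ω | s - 1/(n+1:ℝ) < C ω}) = {ω | s ≤ C ω} := by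
    ext ω
    simp only [Set.mem_iInter, Set.mem_setOf_eq]
    constructor
    · intro h
      by_contra hlt
      push_neg at hlt
      obtain ⟨n, hn⟩ := exists_nat_one_div_lt (show (0:ℝ) < s - C ω by linarith)
      have := h n
      linarith
    · intro h n
      have : (0:ℝ) < 1/(n+1) := by positivity
      linarith
  have h1 : Tendsto (fun n : ℕ => μ {ω | s - 1/(n+1:ℝ) < C ω}) atTop (𝓝 (μ {ω | s ≤ C ω})) := by
    have := tendsto_measure_iInter_atTop
      (μ := μ) (s := fun n : ℕ => {ω | s - 1/(n+1:ℝ) < C ω})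
      (fun n => (measurableSet_lt measurable_const hCm).nullMeasurableSet) hanti
      ⟨0, measure_ne_top μ _⟩
    rwa [hInter] at this
  have h2 : Tendsto (fun n : ℕ => (μ {ω | s - 1/(n+1:ℝ) < C ω}).toReal) atTop
      (𝓝 ((μ {ω | s ≤ C ω}).toReal)) :=
    (ENNReal.tendsto_toReal (measure_ne_top μ _)).comp h1
  have h3 : Tendsto (fun n : ℕ => G0 (s - 1/(n+1:ℝ))) atTop (𝓝 (G0 s)) := by
    apply (hG0cont.tendsto s).comp
    have : Tendsto (fun n : ℕ => s - 1/((n:ℝ)+1)) atTop (𝓝 (s - 0)) :=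
      tendsto_const_nhds.sub tendsto_one_div_add_atTop_nhds_zero_nat
    simpa using this
  have h4 : (fun n : ℕ => G0 (s - 1/(n+1:ℝ))) =
      fun n : ℕ => (μ {ω | s - 1/(n+1:ℝ) < C ω}).toReal := by
    funext n; exact hG0 _
  rw [h4] at h3
  exact tendsto_nhds_unique h2 h3

/-- in the AFT model with `T = exp(X^⊤β⁰ + ε)`, `δ = 1_{T≤C}`,
`Y = min(T,C)`, if `X` is a.s. bounded, `ε` is independent of `X` with
`E[ε²] < ∞` and `E[g_τ(ε)] = 0`, `C` is independent of `(ε, X)`,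
`G₀(t) = P(C > t)` is continuous with `G₀(T) ≥ ζ₀ > 0` a.s., then the
inverse-probability-of-censoring weighted expectile score has mean zero:
`E[(δ / G₀(Y)) g_τ(ε) X] = 0` componentwise. -/
theorem censored_expectile_score_mean_zero
    {Ω : Type*} [MeasurableSpace Ω] (μ : Measure Ω) [IsProbabilityMeasure μ]
    {p : ℕ} (τ : ℝ) (hτ : τ ∈ Set.Ioo (0 : ℝ) 1)
    (X : Ω → Fin p → ℝ) (ε : Ω → ℝ) (C : Ω → ℝ)
    (hXm : Measurable X) (hεm : Measurable ε) (hCm : Measurable C)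
    (hXbd : ∃ c : ℝ, ∀ᵐ ω ∂μ, ∀ j, |X ω j| ≤ c)
    (hIndεX : IndepFun ε X μ)
    (hε2 : Integrable (fun ω => ε ω ^ 2) μ)
    (hgmean : (∫ ω, gExp τ (ε ω) ∂μ) = 0)
    (hIndC : IndepFun C (fun ω => (ε ω, X ω)) μ)
    (β0 : Fin p → ℝ)
    (T : Ω → ℝ) (hT : ∀ ω, T ω = Real.exp ((∑ j, X ω j * β0 j) + ε ω))
    (δ : Ω → ℝ) (hδ : ∀ ω, δ ω = if T ω ≤ C ω then 1 else 0)
    (Y : Ω → ℝ) (hY : ∀ ω, Y ω = min (T ω) (C ω))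
    (G0 : ℝ → ℝ) (hG0 : ∀ t, G0 t = (μ {ω | t < C ω}).toReal)
    (hG0cont : Continuous G0)
    (ζ0 : ℝ) (hζ0 : 0 < ζ0) (hG0T : ∀ᵐ ω ∂μ, ζ0 ≤ G0 (T ω)) :
    ∀ j, (∫ ω, (δ ω / G0 (Y ω)) * gExp τ (ε ω) * X ω j ∂μ) = 0 := by
  intro j
  obtain ⟨cb, hcb⟩ := hXbd
  set cb' : ℝ := |cb| with hcb'
  set E : Ω → ℝ × (Fin p → ℝ) := fun ω => (ε ω, X ω) with hE
  have hEm : Measurable E := hεm.prodMk hXm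
  set tf : ℝ × (Fin p → ℝ) → ℝ := fun a => Real.exp ((∑ k, a.2 k * β0 k) + a.1) with htfdef
  have htf : Measurable tf := by
    apply Real.measurable_exp.comp
    apply Measurable.add
    · exact Finset.measurable_sum _ fun k _ =>
        ((measurable_pi_apply k).comp measurable_snd).mul measurable_const
    · exact measurable_fst
  have hTE : ∀ ω, tf (E ω) = T ω := fun ω => (hT ω).symm
  set ν : Measure ℝ := μ.map C with hν
  set κ : Measure (ℝ × (Fin p → ℝ)) := μ.map E with hκ
  haveI : IsProbabilityMeasure ν := Measure.isProbabilityMeasure_map hCm.aemeasurable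
  haveI : IsProbabilityMeasure κ := Measure.isProbabilityMeasure_map hEm.aemeasurable
  set Ψ : ℝ × (ℝ × (Fin p → ℝ)) → ℝ :=
    fun z => (if tf z.2 ≤ z.1 then (G0 (tf z.2))⁻¹ else 0) * (gExp τ z.2.1 * z.2.2 j) with hΨdef
  have hΨm : Measurable Ψ := by
    apply Measurable.mul
    · exact Measurable.ite (measurableSet_le (htf.comp measurable_snd) measurable_fst)
        ((hG0cont.measurable.comp (htf.comp measurable_snd)).inv) measurable_const
    · exact ((measurable_gExp τ).comp (measurable_fst.comp measurable_snd)).mul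
        ((measurable_pi_apply j).comp (measurable_snd.comp measurable_snd))
  have hrep : ∀ ω, (δ ω / G0 (Y ω)) * gExp τ (ε ω) * X ω j = Ψ (C ω, E ω) := by
    intro ω
    have ht : tf (E ω) = T ω := hTE ω
    simp only [hΨdef, hδ, hY, ht]
    by_cases h : T ω ≤ C ω
    · rw [if_pos h, if_pos h, min_eq_left h]
      rw [div_eq_mul_inv, one_mul]
      ring
    · rw [if_neg h, if_neg h]
      simp
  set S : Set (ℝ × (Fin p → ℝ)) := {a | ζ0 ≤ G0 (tf a) ∧ ∀ k, |a.2 k| ≤ cb'} with hSdef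
  have hSm : MeasurableSet S := by
    apply MeasurableSet.inter
    · exact measurableSet_le measurable_const (hG0cont.measurable.comp htf)
    · have h1 : {a : ℝ × (Fin p → ℝ) | ∀ k, |a.2 k| ≤ cb'} = ⋂ k, {a | |a.2 k| ≤ cb'} := by
        ext a; simp
      show MeasurableSet {a : ℝ × (Fin p → ℝ) | ∀ k, |a.2 k| ≤ cb'}
      rw [h1]
      exact MeasurableSet.iInter fun k =>
        measurableSet_le (by fun_prop) measurable_const
  have hES : ∀ᵐ ω ∂μ, E ω ∈ S := by
    filter_upwards [hG0T, hcb] with ω h1 h2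
    refine ⟨by rw [hTE ω]; exact h1, fun k => (h2 k).trans (le_abs_self cb)⟩
  have hκS : κ Sᶜ = 0 := by
    rw [hκ, Measure.map_apply hEm hSm.compl]
    rw [ae_iff] at hES
    exact hES
  have hκSae : ∀ᵐ a ∂κ, a ∈ S := by
    rw [ae_iff]
    exact hκS
  have hprodSae : ∀ᵐ z ∂(ν.prod κ), z.2 ∈ S := by
    rw [ae_iff]
    have h1 : {z : ℝ × (ℝ × (Fin p → ℝ)) | ¬ z.2 ∈ S} = Set.univ ×ˢ Sᶜ := by
      ext z; simp [Set.mem_prod]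
    rw [h1, Measure.prod_prod, hκS, mul_zero]
  have hεint : Integrable ε μ := by
    refine Integrable.mono' (hε2.add (integrable_const 1)) hεm.aestronglyMeasurable ?_
    filter_upwards with ω
    simp only [Pi.add_apply]
    rw [Real.norm_eq_abs]
    nlinarith [sq_nonneg (|ε ω| - 1), sq_abs (ε ω), abs_nonneg (ε ω)]
  have hbd : Integrable (fun z : ℝ × (ℝ × (Fin p → ℝ)) => ζ0⁻¹ * (2 * |z.2.1|) * cb')
      (ν.prod κ) := by
    have hg : Integrable (fun a : ℝ × (Fin p → ℝ) => ζ0⁻¹ * (2 * |a.1|) * cb') κ := by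
      have h2 : Integrable (fun a : ℝ × (Fin p → ℝ) => |a.1|) κ := by
        rw [hκ, integrable_map_measure measurable_fst.abs.aestronglyMeasurable hEm.aemeasurable]
        exact hεint.abs
      have h3 := (h2.const_mul (ζ0⁻¹ * 2)).mul_const cb'
      refine h3.congr ?_
      filter_upwards with a
      ring
    have h4 := (integrable_const (1:ℝ) : Integrable (fun _ : ℝ => (1:ℝ)) ν).mul_prod hg
    refine h4.congr ?_
    filter_upwards with z
    simp
  have hΨint : Integrable Ψ (ν.prod κ) := by
    refine Integrable.mono' hbd hΨm.aestronglyMeasurable ?_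
    filter_upwards [hprodSae] with z hz
    obtain ⟨hz1, hz2⟩ := hz
    have hG0pos : (0:ℝ) < G0 (tf z.2) := lt_of_lt_of_le hζ0 hz1
    have hif0 : (0:ℝ) ≤ (if tf z.2 ≤ z.1 then (G0 (tf z.2))⁻¹ else 0) := by
      split
      · positivity
      · exact le_refl 0
    have hif1 : (if tf z.2 ≤ z.1 then (G0 (tf z.2))⁻¹ else 0) ≤ ζ0⁻¹ := by
      split
      · exact inv_anti₀ hζ0 hz1
      · positivity
    rw [Real.norm_eq_abs, hΨdef]
    calc |(if tf z.2 ≤ z.1 then (G0 (tf z.2))⁻¹ else 0) * (gExp τ z.2.1 * z.2.2 j)|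
        = (if tf z.2 ≤ z.1 then (G0 (tf z.2))⁻¹ else 0) * (|gExp τ z.2.1| * |z.2.2 j|) := by
          rw [abs_mul, abs_mul, abs_of_nonneg hif0]
      _ ≤ ζ0⁻¹ * ((2 * |z.2.1|) * cb') := by
          refine mul_le_mul hif1 (mul_le_mul (abs_gExp_le hτ _) (hz2 j) (abs_nonneg _)
            (by positivity)) (by positivity) (by positivity)
      _ = ζ0⁻¹ * (2 * |z.2.1|) * cb' := by ring
  have hmapeq : μ.map (fun ω => (C ω, E ω)) = ν.prod κ :=
    (indepFun_iff_map_prod_eq_prod_map_map hCm.aemeasurable hEm.aemeasurable).mp hIndC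
  have hinner : ∀ᵐ a ∂κ, (∫ c, Ψ (c, a) ∂ν) = gExp τ a.1 * a.2 j := by
    filter_upwards [hκSae] with a ha
    have hpos : (0:ℝ) < G0 (tf a) := lt_of_lt_of_le hζ0 ha.1
    have heq : (fun c => Ψ (c, a)) = fun c =>
        Set.indicator {c : ℝ | tf a ≤ c}
          (fun _ => (G0 (tf a))⁻¹ * (gExp τ a.1 * a.2 j)) c := by
      funext c
      by_cases h : tf a ≤ c
      · simp [hΨdef, Set.indicator_of_mem, h, Set.mem_setOf_eq]
      · simp [hΨdef, Set.indicator_of_notMem, h, Set.mem_setOf_eq]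
    have hms : MeasurableSet {c : ℝ | tf a ≤ c} := measurableSet_Ici
    rw [heq, integral_indicator_const _ hms]
    have hνset : ν {c : ℝ | tf a ≤ c} = μ {ω | tf a ≤ C ω} := by
      rw [hν, Measure.map_apply hCm hms]
      rfl
    rw [measureReal_def, hνset, toReal_measure_ge μ hCm hG0 hG0cont (tf a), smul_eq_mul, ← mul_assoc,
      mul_inv_cancel₀ hpos.ne', one_mul]
  have hind : IndepFun (fun ω => gExp τ (ε ω)) (fun ω => X ω j) μ :=
    hIndεX.comp (measurable_gExp τ) (measurable_pi_apply j)
  have hmul := hind.integral_fun_mul_eq_mul_integral ((measurable_gExp τ).comp hεm).aestronglyMeasurable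
    ((measurable_pi_apply j).comp hXm).aestronglyMeasurable
  calc (∫ ω, (δ ω / G0 (Y ω)) * gExp τ (ε ω) * X ω j ∂μ)
      = ∫ ω, Ψ (C ω, E ω) ∂μ := by
        exact integral_congr_ae (Eventually.of_forall hrep)
    _ = ∫ z, Ψ z ∂(μ.map (fun ω => (C ω, E ω))) :=
        (integral_map (hCm.prodMk hEm).aemeasurable hΨm.aestronglyMeasurable).symm
    _ = ∫ z, Ψ z ∂(ν.prod κ) := by rw [hmapeq]
    _ = ∫ a, (∫ c, Ψ (c, a) ∂ν) ∂κ := integral_prod_symm Ψ hΨint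
    _ = ∫ a, gExp τ a.1 * a.2 j ∂κ := integral_congr_ae hinner
    _ = ∫ ω, gExp τ (ε ω) * X ω j ∂μ := by
        rw [hκ]
        exact integral_map hEm.aemeasurable
          (((measurable_gExp τ).comp measurable_fst).mul
            ((measurable_pi_apply j).comp measurable_snd)).aestronglyMeasurable
    _ = (∫ ω, gExp τ (ε ω) ∂μ) * (∫ ω, X ω j ∂μ) := hmul
    _ = 0 := by rw [hgmean, zero_mul]
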